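/- Let X be a real normed space whose dual X* is strictly convex. Then for every subspace Y of X and every continuous linear functional g on Y, there is a unique norm-preserving Hahn–Banach extension of g to X. -/
import Mathlib

set_option maxHeartbeats 1000000
set_option synthInstance.maxHeartbeats 400000


/-- Taylor–Foguel theorem (one direction): if the dual of a real normed space `X`
is strictly convex, then every continuous linear functional on every subspace of `X`
has a unique norm-preserving Hahn–Banach extension. -/
theorem unique_hahn_banach_of_dual_strictly_convex
    {X : Type*} [NormedAddCommGroup X] [NormedSpace ℝ X]
    (hsc : ∀ f g : X →L[ℝ] ℝ, ‖f‖ = 1 → ‖g‖ = 1 → ‖f + g‖ = 2 → f = g)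
    (Y : Subspace ℝ X) (g : Y →L[ℝ] ℝ) :
    ∃! f : X →L[ℝ] ℝ, (∀ y : Y, f y = g y) ∧ ‖f‖ = ‖g‖ := by
  obtain ⟨f, hf, hfn⟩ := exists_extension_norm_eq Y g
  refine ⟨f, ⟨hf, hfn⟩, ?_⟩
  rintro f' ⟨hf', hfn'⟩
  -- `g` has norm bounded by that of any extension
  have key : ∀ h : X →L[ℝ] ℝ, (∀ y : Y, h y = g y) → ‖g‖ ≤ ‖h‖ := by
    intro h hh
    refine g.opNorm_le_bound (norm_nonneg h) fun y => ?_
    rw [← hh y]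
    exact h.le_opNorm y
  by_cases hg0 : ‖g‖ = 0
  · have h1 : f' = 0 := by simpa [hg0] using hfn'
    have h2 : f = 0 := by simpa [hg0] using hfn
    rw [h1, h2]
  · have hgpos : (0:ℝ) < ‖g‖ := lt_of_le_of_ne (norm_nonneg g) (Ne.symm hg0)
    -- midpoint extends g
    have hmid : ∀ y : Y, ((2:ℝ)⁻¹ • (f' + f)) y = g y := by
      intro y
      simp [hf y, hf' y]
      ring
    have h1 : ‖g‖ ≤ ‖(2:ℝ)⁻¹ • (f' + f)‖ := key _ hmid
    have h2 : ‖(2:ℝ)⁻¹ • (f' + f)‖ = 2⁻¹ * ‖f' + f‖ := by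
      have := norm_smul ((2:ℝ)⁻¹) (f' + f); simpa using this
    have hsum : ‖f' + f‖ = 2 * ‖g‖ := by
      have hle : ‖f' + f‖ ≤ 2 * ‖g‖ := by
        calc ‖f' + f‖ ≤ ‖f'‖ + ‖f‖ := norm_add_le _ _
          _ = 2 * ‖g‖ := by rw [hfn, hfn']; ring
      have hge : 2 * ‖g‖ ≤ ‖f' + f‖ := by
        rw [h2] at h1; linarith
      linarith
    -- normalize
    have e1 : ‖‖g‖⁻¹ • f'‖ = 1 := by
      have := norm_smul (‖g‖⁻¹) f'
      rw [this, hfn']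
      rw [Real.norm_eq_abs, abs_of_nonneg (by positivity)]
      field_simp
    have e2 : ‖‖g‖⁻¹ • f‖ = 1 := by
      have := norm_smul (‖g‖⁻¹) f
      rw [this, hfn]
      rw [Real.norm_eq_abs, abs_of_nonneg (by positivity)]
      field_simp
    have e3 : ‖‖g‖⁻¹ • f' + ‖g‖⁻¹ • f‖ = 2 := by
      rw [← smul_add]
      have := norm_smul (‖g‖⁻¹) (f' + f)
      rw [this, hsum, Real.norm_eq_abs, abs_of_nonneg (by positivity)]
      field_simp
    have := hsc _ _ e1 e2 e3
    have hinj : f' = f := by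
      have := congrArg (fun h => ‖g‖ • h) this
      simpa [smul_smul, mul_inv_cancel₀ hg0] using this
    exact hinj
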